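/- If a normalized ℝ-mold M = (μ_i) is fractal with first period {1, 1+p} (where 0 < p < 1), then: (i) for every ℓ ∈ ℕ the map n ↦ f_ℓ(n) is strictly increasing on {0,…,2^ℓ−1} and the ℓ-th period of M equals {ℓ + f_ℓ(0), ℓ + f_ℓ(1), …, ℓ + f_ℓ(2^ℓ−1)}; and (ii) for every i ∈ ℕ, μ_i = ⌊log₂(i+1)⌋ + f_{⌊log₂(i+1)⌋}(i + 1 − 2^{⌊log₂(i+1)⌋}). -/

import Mathlib

/-- An `ℝ`-mold: a strictly increasing sequence of nonnegative reals starting at `0`,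
whose consecutive differences become arbitrarily small, closed under addition. -/
def IsRMold (μ : ℕ → ℝ) : Prop :=
  StrictMono μ ∧ (∀ i, 0 ≤ μ i) ∧ μ 0 = 0 ∧
    (∀ ε : ℝ, 0 < ε → ∃ n₀ : ℕ, ∀ n ≥ n₀, μ (n + 1) - μ n < ε) ∧
    (∀ i j : ℕ, ∃ k : ℕ, μ k = μ i + μ j)

/-- The `i`-th period of a (normalized) mold `μ`: elements `x` of the mold with `i ≤ x < i + 1`. -/
def period (μ : ℕ → ℝ) (i : ℕ) : Set ℝ :=
  {x | (∃ k, μ k = x) ∧ (i : ℝ) ≤ x ∧ x < (i : ℝ) + 1}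

/-- A normalized mold is fractal if its periods can be enumerated as
`π_i = {i + τ^{(i)}_0, …, i + τ^{(i)}_{l_i - 1}}` with
`0 = τ^{(i)}_0 < ⋯ < τ^{(i)}_{l_i - 1} < τ^{(i)}_{l_i} = 1`, and each period is obtained by
dividing each interval of the previous one in the same proportions as the first period divides
`[0, 1]`:
`π_{i+1} = ⋃_{r < l_i} ⋃_{s < l} {(i+1) + τ^{(i)}_r + τ^{(1)}_s (τ^{(i)}_{r+1} - τ^{(i)}_r)}`. -/
def IsFractal (μ : ℕ → ℝ) : Prop :=
  ∃ (l : ℕ → ℕ) (τ : ℕ → ℕ → ℝ),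
    (∀ i, 0 < l i) ∧
    (∀ i, τ i 0 = 0) ∧
    (∀ i, τ i (l i) = 1) ∧
    (∀ i, ∀ r s : ℕ, r < s → s ≤ l i → τ i r < τ i s) ∧
    (∀ i, period μ i = {x | ∃ r < l i, x = (i : ℝ) + τ i r}) ∧
    (∀ i, period μ (i + 1) =
      {x | ∃ r < l i, ∃ s < l 1, x = ((i : ℝ) + 1) + τ i r + τ 1 s * (τ i (r + 1) - τ i r)})

/-- The golden ratio `φ = (1 + √5) / 2`. -/
noncomputable def phi : ℝ := (1 + Real.sqrt 5) / 2

/-- Given `p ∈ (0,1)` (with `q = 1 - p`), the recursively defined division functions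
`f_ℓ : {0, …, 2^ℓ - 1} → [0, 1)`:
`f₀ 0 = 0`, `f_{ℓ+1} n = p * f_ℓ n` if `n < 2^ℓ`, and `f_{ℓ+1} n = p + q * f_ℓ (n - 2^ℓ)`
otherwise. -/
noncomputable def fcut (p : ℝ) : ℕ → ℕ → ℝ
  | 0, _ => 0
  | ℓ + 1, n => if n < 2 ^ ℓ then p * fcut p ℓ n else p + (1 - p) * fcut p ℓ (n - 2 ^ ℓ)

section Aux

/-- `fcut` extended by value `1` at `n = 2^ℓ`. -/
noncomputable def Fx (p : ℝ) (ℓ n : ℕ) : ℝ := if n = 2 ^ ℓ then 1 else fcut p ℓ n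

variable {p : ℝ}

lemma two_pow_succ' (ℓ : ℕ) : (2:ℕ) ^ (ℓ+1) = 2 ^ ℓ + 2 ^ ℓ := by ring

lemma two_pow_pos' (ℓ : ℕ) : (0:ℕ) < 2 ^ ℓ := pow_pos two_pos ℓ

lemma fcut_nonneg (hp0 : 0 < p) (hp1 : p < 1) : ∀ ℓ n, 0 ≤ fcut p ℓ n
  | 0, _ => le_refl 0
  | ℓ + 1, n => by
    rw [fcut]
    split
    · exact mul_nonneg hp0.le (fcut_nonneg hp0 hp1 ℓ n)
    · have := fcut_nonneg hp0 hp1 ℓ (n - 2 ^ ℓ)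
      nlinarith

lemma fcut_lt_one (hp0 : 0 < p) (hp1 : p < 1) : ∀ ℓ n, n < 2 ^ ℓ → fcut p ℓ n < 1
  | 0, _, _ => one_pos
  | ℓ + 1, n, hn => by
    rw [fcut]
    split
    · rename_i h
      have h1 := fcut_lt_one hp0 hp1 ℓ n h
      have h0 := fcut_nonneg hp0 hp1 ℓ n
      nlinarith
    · rename_i h
      have hpow := two_pow_succ' ℓ
      have hlt : n - 2 ^ ℓ < 2 ^ ℓ := by omega
      have h1 := fcut_lt_one hp0 hp1 ℓ (n - 2 ^ ℓ) hlt
      have h0 := fcut_nonneg hp0 hp1 ℓ (n - 2 ^ ℓ)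
      nlinarith

lemma fcut_zero' : ∀ ℓ, fcut p ℓ 0 = 0
  | 0 => rfl
  | ℓ + 1 => by rw [fcut, if_pos (two_pow_pos' ℓ), fcut_zero' ℓ, mul_zero]

lemma fcut_strictMono (hp0 : 0 < p) (hp1 : p < 1) :
    ∀ ℓ m n, m < n → n < 2 ^ ℓ → fcut p ℓ m < fcut p ℓ n
  | 0, m, n, hmn, hn => by omega
  | ℓ + 1, m, n, hmn, hn => by
    have hpow := two_pow_succ' ℓ
    rw [fcut, fcut]
    by_cases hm : m < 2 ^ ℓ
    · rw [if_pos hm]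
      by_cases hn' : n < 2 ^ ℓ
      · rw [if_pos hn']
        exact mul_lt_mul_of_pos_left (fcut_strictMono hp0 hp1 ℓ m n hmn hn') hp0
      · rw [if_neg hn']
        have h1 := fcut_lt_one hp0 hp1 ℓ m hm
        have h0 := fcut_nonneg hp0 hp1 ℓ (n - 2 ^ ℓ)
        nlinarith
    · rw [if_neg hm, if_neg (by omega : ¬ n < 2 ^ ℓ)]
      have : fcut p ℓ (m - 2 ^ ℓ) < fcut p ℓ (n - 2 ^ ℓ) :=
        fcut_strictMono hp0 hp1 ℓ _ _ (by omega) (by omega)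
      nlinarith

lemma Fx_top (ℓ : ℕ) : Fx p ℓ (2 ^ ℓ) = 1 := if_pos rfl

lemma Fx_of_lt {ℓ n : ℕ} (h : n < 2 ^ ℓ) : Fx p ℓ n = fcut p ℓ n := if_neg (by omega)

lemma Fx_zero (ℓ : ℕ) : Fx p ℓ 0 = 0 := by
  rw [Fx_of_lt (two_pow_pos' ℓ), fcut_zero']

lemma Fx_strictMono (hp0 : 0 < p) (hp1 : p < 1) {ℓ m n : ℕ} (hmn : m < n) (hn : n ≤ 2 ^ ℓ) :
    Fx p ℓ m < Fx p ℓ n := by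
  rcases eq_or_lt_of_le hn with rfl | hn
  · rw [Fx_top, Fx_of_lt hmn]
    exact fcut_lt_one hp0 hp1 ℓ m hmn
  · rw [Fx_of_lt (by omega), Fx_of_lt hn]
    exact fcut_strictMono hp0 hp1 ℓ m n hmn hn

lemma Fx_lower {ℓ r : ℕ} (h : r ≤ 2 ^ ℓ) : Fx p (ℓ + 1) r = p * Fx p ℓ r := by
  have hpow := two_pow_succ' ℓ
  have hpos := two_pow_pos' ℓ
  rcases eq_or_lt_of_le h with rfl | h
  · rw [Fx_top, Fx_of_lt (by omega), fcut, if_neg (lt_irrefl _), Nat.sub_self, fcut_zero']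
    ring
  · rw [Fx_of_lt h, Fx_of_lt (by omega), fcut, if_pos h]

lemma Fx_upper {ℓ r : ℕ} (h : r ≤ 2 ^ ℓ) : Fx p (ℓ + 1) (2 ^ ℓ + r) = p + (1 - p) * Fx p ℓ r := by
  have hpow := two_pow_succ' ℓ
  have hpos := two_pow_pos' ℓ
  rcases eq_or_lt_of_le h with rfl | h
  · rw [← hpow, Fx_top, Fx_top]; ring
  · rw [Fx_of_lt h, Fx_of_lt (by omega), fcut, if_neg (by omega), Nat.add_sub_cancel_left]

lemma Fx_even : ∀ ℓ r, r ≤ 2 ^ ℓ → Fx p (ℓ + 1) (2 * r) = Fx p ℓ r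
  | 0, r, hr => by
    interval_cases r
    · rw [Nat.mul_zero, Fx_zero, Fx_zero]
    · have h1 : Fx p 1 (2 * 1) = 1 := by
        rw [(by norm_num : 2 * 1 = 2 ^ 1), Fx_top]
      have h2 : Fx p 0 1 = 1 := by
        rw [(by norm_num : (1:ℕ) = 2 ^ 0), Fx_top]
      rw [h1, h2]
  | ℓ + 1, r, hr => by
    have hpow := two_pow_succ' ℓ
    have hpos := two_pow_pos' ℓ
    by_cases h : r ≤ 2 ^ ℓ
    · rw [Fx_lower (by omega : 2 * r ≤ 2 ^ (ℓ+1)), Fx_lower h, Fx_even ℓ r h]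
    · obtain ⟨t, rfl⟩ : ∃ t, r = 2 ^ ℓ + t := ⟨r - 2 ^ ℓ, by omega⟩
      have ht : t ≤ 2 ^ ℓ := by omega
      have e1 : 2 * (2 ^ ℓ + t) = 2 ^ (ℓ + 1) + 2 * t := by omega
      rw [e1, Fx_upper (by omega : 2 * t ≤ 2 ^ (ℓ+1)), Fx_even ℓ t ht, Fx_upper ht]

lemma Fx_odd : ∀ ℓ r, r < 2 ^ ℓ →
    Fx p (ℓ + 1) (2 * r + 1) = Fx p ℓ r + p * (Fx p ℓ (r + 1) - Fx p ℓ r)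
  | 0, r, hr => by
    interval_cases r
    have h1 : Fx p 1 (2 * 0 + 1) = fcut p 1 1 := by
      rw [(by norm_num : 2 * 0 + 1 = 1)]; exact Fx_of_lt (by norm_num)
    have h2 : fcut p 1 1 = p := by
      rw [fcut, if_neg (by norm_num), pow_zero, Nat.sub_self, fcut_zero']; ring
    have h3 : Fx p 0 1 = 1 := by rw [(by norm_num : (1:ℕ) = 2 ^ 0), Fx_top]
    rw [h1, h2, h3, Fx_zero]; ring
  | ℓ + 1, r, hr => by
    have hpow := two_pow_succ' ℓ
    have hpos := two_pow_pos' ℓ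
    by_cases h : r < 2 ^ ℓ
    · rw [Fx_lower (by omega : 2 * r + 1 ≤ 2 ^ (ℓ+1)), Fx_odd ℓ r h,
        Fx_lower (by omega : r ≤ 2 ^ ℓ), Fx_lower (by omega : r + 1 ≤ 2 ^ ℓ)]
      ring
    · obtain ⟨t, rfl⟩ : ∃ t, r = 2 ^ ℓ + t := ⟨r - 2 ^ ℓ, by omega⟩
      have ht : t < 2 ^ ℓ := by omega
      have e1 : 2 * (2 ^ ℓ + t) + 1 = 2 ^ (ℓ + 1) + (2 * t + 1) := by omega
      have e3 : 2 ^ ℓ + t + 1 = 2 ^ ℓ + (t + 1) := by omega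
      rw [e1, Fx_upper (by omega : 2 * t + 1 ≤ 2 ^ (ℓ+1)), Fx_odd ℓ t ht, e3,
        Fx_upper (by omega : t + 1 ≤ 2 ^ ℓ), Fx_upper (by omega : t ≤ 2 ^ ℓ)]
      ring

lemma enum_unique {f g : ℕ → ℝ} {a b : ℕ}
    (hf : ∀ i j, i < j → j < a → f i < f j) (hg : ∀ i j, i < j → j < b → g i < g j)
    (h : {x : ℝ | ∃ i, i < a ∧ x = f i} = {x : ℝ | ∃ j, j < b ∧ x = g j}) :
    a = b ∧ ∀ i, i < a → f i = g i := by
  have hSf : {x : ℝ | ∃ i, i < a ∧ x = f i} = f '' Set.Iio a := by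
    ext x; simp [Set.mem_image, eq_comm]
  have hSg : {x : ℝ | ∃ j, j < b ∧ x = g j} = g '' Set.Iio b := by
    ext x; simp [Set.mem_image, eq_comm]
  have hinjf : Set.InjOn f (Set.Iio a) := by
    intro i hi j hj hij
    by_contra hne
    rcases Nat.lt_or_ge i j with hlt | hge
    · exact absurd hij (ne_of_lt (hf i j hlt hj))
    · have : j < i := by omega
      exact absurd hij.symm (ne_of_lt (hf j i this hi))
  have hinjg : Set.InjOn g (Set.Iio b) := by
    intro i hi j hj hij
    by_contra hne
    rcases Nat.lt_or_ge i j with hlt | hge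
    · exact absurd hij (ne_of_lt (hg i j hlt hj))
    · have : j < i := by omega
      exact absurd hij.symm (ne_of_lt (hg j i this hi))
  have hab : a = b := by
    have h1 : ((Finset.range a).image f).card = a := by
      rw [Finset.card_image_of_injOn (by simpa using hinjf), Finset.card_range]
    have h2 : ((Finset.range b).image g).card = b := by
      rw [Finset.card_image_of_injOn (by simpa using hinjg), Finset.card_range]
    have : ((Finset.range a).image f) = ((Finset.range b).image g) := by
      apply Finset.coe_injective
      rw [Finset.coe_image, Finset.coe_image, Finset.coe_range, Finset.coe_range]
      rw [← hSf, ← hSg, h]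
    rw [← h1, ← h2, this]
  subst hab
  refine ⟨rfl, ?_⟩
  have hf' : StrictMono (fun i : Fin a => f i) := fun i j hij => hf i j hij j.isLt
  have hg' : StrictMono (fun i : Fin a => g i) := fun i j hij => hg i j hij j.isLt
  have hr : Set.range (fun i : Fin a => f i) = Set.range (fun i : Fin a => g i) := by
    have e1 : Set.range (fun i : Fin a => f i) = f '' Set.Iio a := by
      ext x; constructor
      · rintro ⟨i, rfl⟩; exact ⟨i, i.isLt, rfl⟩
      · rintro ⟨i, hi, rfl⟩; exact ⟨⟨i, hi⟩, rfl⟩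
    have e2 : Set.range (fun i : Fin a => g i) = g '' Set.Iio a := by
      ext x; constructor
      · rintro ⟨i, rfl⟩; exact ⟨i, i.isLt, rfl⟩
      · rintro ⟨i, hi, rfl⟩; exact ⟨⟨i, hi⟩, rfl⟩
    rw [e1, e2, ← hSf, ← hSg, h]
  have inst : WellFoundedLT (Fin a) := inferInstance
  have := (StrictMono.range_inj (β := Fin a) hf' hg').1 hr
  intro i hi
  exact congrFun this ⟨i, hi⟩

end Aux

/-- structure of fractal molds of granularity 2 with first period `{1, 1+p}`:
(i) each `f_ℓ` is strictly increasing on `{0, …, 2^ℓ - 1}` and the `ℓ`-th period of `M` is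
`{ℓ + f_ℓ 0, …, ℓ + f_ℓ (2^ℓ - 1)}`; (ii) `μ_i = ⌊log₂ (i+1)⌋ + f_{⌊log₂ (i+1)⌋}(i+1-2^{⌊log₂ (i+1)⌋})`. -/
theorem fractal_mold_structure (μ : ℕ → ℝ) (p : ℝ) (hp0 : 0 < p) (hp1 : p < 1)
    (hmold : IsRMold μ) (hnorm : μ 1 = 1) (hfr : IsFractal μ)
    (hper : period μ 1 = {1, 1 + p}) :
    (∀ ℓ : ℕ,
      (∀ m n : ℕ, m < n → n < 2 ^ ℓ → fcut p ℓ m < fcut p ℓ n) ∧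
      period μ ℓ = {x : ℝ | ∃ n : ℕ, n < 2 ^ ℓ ∧ x = (ℓ : ℝ) + fcut p ℓ n}) ∧
    (∀ i : ℕ, μ i = (Nat.log 2 (i + 1) : ℝ) +
      fcut p (Nat.log 2 (i + 1)) (i + 1 - 2 ^ Nat.log 2 (i + 1))) := by
  obtain ⟨hμmono, hμnonneg, hμ0, _, _⟩ := hmold
  obtain ⟨l, τ, hl, hτ0, hτl, hτmono, hpd, hfrac⟩ := hfr
  -- the zeroth period is {0}
  have period0 : period μ 0 = {x : ℝ | ∃ n, n < 2 ^ 0 ∧ x = (0:ℝ) + Fx p 0 n} := by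
    ext x
    simp only [period, Set.mem_setOf_eq, pow_zero, Nat.lt_one_iff, Nat.cast_zero]
    constructor
    · rintro ⟨⟨k, rfl⟩, h0, h1⟩
      have hk : k < 1 := by
        by_contra hk
        push_neg at hk
        have : μ 1 ≤ μ k := hμmono.le_iff_le.2 hk
        rw [hnorm] at this
        linarith
      interval_cases k
      exact ⟨0, rfl, by rw [Fx_zero, hμ0, add_zero]⟩
    · rintro ⟨n, rfl, rfl⟩
      rw [Fx_zero, add_zero]
      exact ⟨⟨0, hμ0⟩, le_refl 0, by norm_num⟩
  -- first period data: l 1 = 2, τ 1 0 = 0, τ 1 1 = p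
  have h1data : l 1 = 2 ∧ ∀ s, s < l 1 → (1:ℝ) + τ 1 s = 1 + (if s = 0 then 0 else p) := by
    apply enum_unique (a := l 1) (b := 2)
      (f := fun s => (1:ℝ) + τ 1 s) (g := fun s => 1 + (if s = 0 then 0 else p))
    · intro i j hij hj
      exact (add_lt_add_iff_left 1).2 (hτmono 1 i j hij hj.le)
    · intro i j hij hj
      have hi : i = 0 := by omega
      have hjj : j = 1 := by omega
      subst hi; subst hjj
      norm_num
      linarith
    · have hpd1 : period μ 1 = {x : ℝ | ∃ i, i < l 1 ∧ x = (1:ℝ) + τ 1 i} := by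
        rw [hpd 1]; norm_num
      rw [← hpd1, hper]
      ext x
      simp only [Set.mem_insert_iff, Set.mem_singleton_iff, Set.mem_setOf_eq]
      constructor
      · rintro (rfl | rfl)
        · exact ⟨0, by omega, by norm_num⟩
        · exact ⟨1, by omega, by norm_num⟩
      · rintro ⟨j, hj, rfl⟩
        interval_cases j
        · left; norm_num
        · right; norm_num
  obtain ⟨hl1, hτ1⟩ := h1data
  have hτ10 : τ 1 0 = 0 := hτ0 1
  have hτ11 : τ 1 1 = p := by
    have := hτ1 1 (by omega)
    simp only [if_neg one_ne_zero] at this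
    linarith
  -- main structural induction: l ℓ = 2^ℓ and τ ℓ = Fx p ℓ
  have Q : ∀ ℓ, l ℓ = 2 ^ ℓ ∧ ∀ r, r ≤ 2 ^ ℓ → τ ℓ r = Fx p ℓ r := by
    intro ℓ
    induction ℓ with
    | zero =>
      have hpd0 : period μ 0 = {x : ℝ | ∃ i, i < l 0 ∧ x = (0:ℝ) + τ 0 i} := by
        rw [hpd 0]; norm_num
      have h := enum_unique (f := fun i => (0:ℝ) + τ 0 i) (g := fun n => (0:ℝ) + Fx p 0 n)
        (a := l 0) (b := 2 ^ 0)
        (fun i j hij hj => (add_lt_add_iff_left 0).2 (hτmono 0 i j hij hj.le))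
        (fun i j hij hj => by rw [pow_zero] at hj; omega)
        (by rw [← hpd0, period0])
      obtain ⟨hL, hT⟩ := h
      refine ⟨hL, fun r hr => ?_⟩
      rcases eq_or_lt_of_le hr with rfl | hr
      · rw [Fx_top, ← hL, hτl]
      · have := hT r (by omega)
        exact add_left_cancel this
    | succ ℓ ih =>
      obtain ⟨hlℓ, hτℓ⟩ := ih
      have hpow := two_pow_succ' ℓ
      have hpos := two_pow_pos' ℓ
      have hset : period μ (ℓ+1) =
          {x : ℝ | ∃ n, n < 2 ^ (ℓ+1) ∧ x = ((ℓ:ℝ) + 1) + Fx p (ℓ+1) n} := by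
        rw [hfrac ℓ]
        ext x
        simp only [Set.mem_setOf_eq]
        constructor
        · rintro ⟨r, hr, s, hs, rfl⟩
          rw [hlℓ] at hr
          rw [hl1] at hs
          have hτr := hτℓ r (by omega)
          have hτr1 := hτℓ (r+1) (by omega)
          interval_cases s
          · refine ⟨2*r, by omega, ?_⟩
            rw [hτ10, hτr, hτr1, Fx_even ℓ r (by omega)]
            ring
          · refine ⟨2*r+1, by omega, ?_⟩
            rw [hτ11, hτr, hτr1, Fx_odd ℓ r hr]
            ring
        · rintro ⟨n, hn, rfl⟩
          rcases Nat.even_or_odd n with ⟨r, hr⟩ | ⟨r, hr⟩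
          · have hr' : n = 2 * r := by omega
            subst hr'
            have hrlt : r < 2 ^ ℓ := by omega
            refine ⟨r, by omega, 0, by omega, ?_⟩
            rw [hτ10, hτℓ r (by omega), Fx_even ℓ r (by omega)]
            ring
          · subst hr
            have hrlt : r < 2 ^ ℓ := by omega
            refine ⟨r, by omega, 1, by omega, ?_⟩
            rw [hτ11, hτℓ r (by omega), hτℓ (r+1) (by omega), Fx_odd ℓ r hrlt]
            ring
      have hpd' : period μ (ℓ+1) =
          {x : ℝ | ∃ i, i < l (ℓ+1) ∧ x = ((ℓ:ℝ)+1) + τ (ℓ+1) i} := by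
        rw [hpd (ℓ+1)]
        simp only [Nat.cast_add, Nat.cast_one]
      have h := enum_unique (f := fun i => ((ℓ:ℝ)+1) + τ (ℓ+1) i)
        (g := fun n => ((ℓ:ℝ)+1) + Fx p (ℓ+1) n)
        (a := l (ℓ+1)) (b := 2 ^ (ℓ+1))
        (fun i j hij hj => (add_lt_add_iff_left _).2 (hτmono (ℓ+1) i j hij hj.le))
        (fun i j hij hj => (add_lt_add_iff_left _).2 (Fx_strictMono hp0 hp1 hij hj.le))
        (by rw [← hpd', hset])
      obtain ⟨hL, hT⟩ := h
      refine ⟨hL, fun r hr => ?_⟩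
      rcases eq_or_lt_of_le hr with rfl | hr
      · rw [Fx_top, ← hL, hτl]
      · have := hT r (by omega)
        exact add_left_cancel this
  -- the explicit description of every period
  have hperiodf : ∀ ℓ, period μ ℓ =
      {x : ℝ | ∃ n, n < 2 ^ ℓ ∧ x = (ℓ:ℝ) + fcut p ℓ n} := by
    intro ℓ
    obtain ⟨hL, hT⟩ := Q ℓ
    rw [hpd ℓ]
    ext x
    simp only [Set.mem_setOf_eq]
    constructor
    · rintro ⟨r, hr, rfl⟩
      rw [hL] at hr
      refine ⟨r, hr, ?_⟩
      rw [hT r hr.le, Fx_of_lt hr]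
    · rintro ⟨n, hn, rfl⟩
      refine ⟨n, by omega, ?_⟩
      rw [hT n hn.le, Fx_of_lt hn]
  -- part (ii): identify μ with the explicit enumeration
  have hlog : ∀ i : ℕ, 2 ^ Nat.log 2 (i+1) ≤ i + 1 ∧ i + 1 < 2 ^ (Nat.log 2 (i+1) + 1) :=
    fun i => ⟨Nat.pow_log_le_self 2 (by omega), Nat.lt_pow_succ_log_self one_lt_two _⟩
  set g : ℕ → ℝ := fun j => (Nat.log 2 (j + 1) : ℝ) +
      fcut p (Nat.log 2 (j + 1)) (j + 1 - 2 ^ Nat.log 2 (j + 1)) with hgdef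
  have hgapp : ∀ j, g j = (Nat.log 2 (j + 1) : ℝ) +
      fcut p (Nat.log 2 (j + 1)) (j + 1 - 2 ^ Nat.log 2 (j + 1)) := fun j => rfl
  have hgmono : StrictMono g := by
    apply strictMono_nat_of_lt_succ
    intro k
    obtain ⟨h1, h2⟩ := hlog k
    have hpow := two_pow_succ' (Nat.log 2 (k+1))
    have hpos := two_pow_pos' (Nat.log 2 (k+1))
    have ek : k + 1 + 1 = k + 2 := rfl
    by_cases hc : k + 2 < 2 ^ (Nat.log 2 (k+1) + 1)
    · have hL2 : Nat.log 2 (k+2) = Nat.log 2 (k+1) :=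
        Nat.log_eq_of_pow_le_of_lt_pow (by omega) hc
      rw [hgapp, hgapp, ek, hL2]
      apply (add_lt_add_iff_left _).2
      exact fcut_strictMono hp0 hp1 _ _ _ (by omega) (by omega)
    · have he2 : k + 2 = 2 ^ (Nat.log 2 (k+1) + 1) := by omega
      have hpow2 : (2:ℕ) ^ (Nat.log 2 (k+1) + 2) =
          2 ^ (Nat.log 2 (k+1) + 1) + 2 ^ (Nat.log 2 (k+1) + 1) := by ring
      have hL2 : Nat.log 2 (k+2) = Nat.log 2 (k+1) + 1 :=
        Nat.log_eq_of_pow_le_of_lt_pow (by omega) (by omega)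
      rw [hgapp, hgapp, ek, hL2]
      have e0 : k + 2 - 2 ^ (Nat.log 2 (k+1) + 1) = 0 := by omega
      rw [e0, fcut_zero']
      have hfl : fcut p (Nat.log 2 (k+1)) (k + 1 - 2 ^ Nat.log 2 (k+1)) < 1 :=
        fcut_lt_one hp0 hp1 _ _ (by omega)
      push_cast
      linarith
  have hrange : Set.range μ = Set.range g := by
    ext x
    constructor
    · rintro ⟨k, rfl⟩
      have hx0 : (0:ℝ) ≤ μ k := hμnonneg k
      have hx1 : ((⌊μ k⌋₊ : ℕ) : ℝ) ≤ μ k := Nat.floor_le hx0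
      have hx2 : μ k < (⌊μ k⌋₊ : ℝ) + 1 := Nat.lt_floor_add_one _
      have hmem : μ k ∈ period μ ⌊μ k⌋₊ := ⟨⟨k, rfl⟩, hx1, hx2⟩
      rw [hperiodf ⌊μ k⌋₊] at hmem
      obtain ⟨n, hn, he⟩ := hmem
      have hpos := two_pow_pos' ⌊μ k⌋₊
      have hpow := two_pow_succ' ⌊μ k⌋₊
      refine ⟨2 ^ ⌊μ k⌋₊ - 1 + n, ?_⟩
      have e1 : (2 ^ ⌊μ k⌋₊ - 1 + n) + 1 = 2 ^ ⌊μ k⌋₊ + n := by omega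
      have hL' : Nat.log 2 ((2 ^ ⌊μ k⌋₊ - 1 + n) + 1) = ⌊μ k⌋₊ := by
        rw [e1]
        exact Nat.log_eq_of_pow_le_of_lt_pow (by omega) (by omega)
      have e2 : (2 ^ ⌊μ k⌋₊ - 1 + n) + 1 - 2 ^ ⌊μ k⌋₊ = n := by omega
      rw [hgapp, hL', e2, ← he]
    · rintro ⟨i, rfl⟩
      obtain ⟨h1, h2⟩ := hlog i
      have hpow := two_pow_succ' (Nat.log 2 (i+1))
      have hmem : g i ∈ period μ (Nat.log 2 (i+1)) := by
        rw [hperiodf]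
        exact ⟨i + 1 - 2 ^ Nat.log 2 (i+1), by omega, hgapp i⟩
      exact hmem.1
  have hμeq : μ = g := (hμmono.range_inj hgmono).1 hrange
  exact ⟨fun ℓ => ⟨fcut_strictMono hp0 hp1 ℓ, hperiodf ℓ⟩, fun i => congrFun hμeq i⟩
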